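/- Let X be a Banach space with a semi-normalized Schauder basis (eₙ). The basis is quasi-greedy with constant C_w = 1 (i.e., ‖G_N(x)‖ ≤ ‖x‖ for all x, N, and all admissible greedy sets) if and only if it is 1-suppression unconditional (i.e., ‖P_A(x)‖ ≤ ‖x‖ for all x ∈ X and all A ⊆ ℕ). -/

import Mathlib

open Finset Filter

/-- A Schauder basis of a real Banach space, given with its biorthogonal functionals. -/
structure BiorthSchauderBasis (X : Type*) [NormedAddCommGroup X] [NormedSpace ℝ X] where
  e : ℕ → X
  coord : ℕ → X →L[ℝ] ℝ
  biorth : ∀ m n, coord m (e n) = if m = n then 1 else 0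
  expansion : ∀ x : X, Tendsto (fun N => ∑ n ∈ Finset.range N, coord n x • e n)
    atTop (nhds x)

/-- `Λ` is an admissible greedy set for `x`: every coefficient inside `Λ`
dominates every coefficient outside. -/
def IsGreedySet {X : Type*} [NormedAddCommGroup X] [NormedSpace ℝ X]
    (B : BiorthSchauderBasis X) (x : X) (Λ : Finset ℕ) : Prop :=
  ∀ j ∈ Λ, ∀ k ∉ Λ, |B.coord k x| ≤ |B.coord j x|

/-- The corresponding greedy approximation `G_N(x)` with greedy set `Λ`. -/
noncomputable def greedySum {X : Type*} [NormedAddCommGroup X] [NormedSpace ℝ X]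
    (B : BiorthSchauderBasis X) (x : X) (Λ : Finset ℕ) : X :=
  ∑ j ∈ Λ, B.coord j x • B.e j

/-- The basis is semi-normalized. -/
def SemiNormalized {X : Type*} [NormedAddCommGroup X] [NormedSpace ℝ X]
    (B : BiorthSchauderBasis X) : Prop :=
  ∃ c C : ℝ, 0 < c ∧ ∀ n, c ≤ ‖B.e n‖ ∧ ‖B.e n‖ ≤ C

section Aux

variable {X : Type*} [NormedAddCommGroup X] [NormedSpace ℝ X]

lemma coord_sum (B : BiorthSchauderBasis X) (s : Finset ℕ) (c : ℕ → ℝ) (m : ℕ) :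
    B.coord m (∑ n ∈ s, c n • B.e n) = if m ∈ s then c m else 0 := by
  rw [map_sum]
  simp only [map_smul, B.biorth, smul_eq_mul, mul_ite, mul_one, mul_zero]
  exact Finset.sum_ite_eq s m c

/-- Coefficients of any vector are bounded. -/
lemma coord_bounded (B : BiorthSchauderBasis X) (hsn : SemiNormalized B) (x : X) :
    ∃ K : ℝ, ∀ n, |B.coord n x| ≤ K := by
  obtain ⟨c, C, hc, hce⟩ := hsn
  have hterm : Tendsto (fun n => B.coord n x • B.e n) atTop (nhds 0) := by
    have h := B.expansion x
    have h2 : Tendsto (fun N => (∑ n ∈ Finset.range (N + 1), B.coord n x • B.e n)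
        - ∑ n ∈ Finset.range N, B.coord n x • B.e n) atTop (nhds (x - x)) :=
      (h.comp (tendsto_add_atTop_nat 1)).sub h
    simpa [Finset.sum_range_succ] using h2
  have habs : Tendsto (fun n => |B.coord n x|) atTop (nhds 0) := by
    apply squeeze_zero (fun n => abs_nonneg _) (g := fun n => ‖B.coord n x • B.e n‖ / c)
    · intro n
      rw [norm_smul, Real.norm_eq_abs, le_div_iff₀ hc]
      exact mul_le_mul_of_nonneg_left (hce n).1 (abs_nonneg _)
    · simpa using (hterm.norm).div_const c
  obtain ⟨K, hK⟩ := habs.bddAbove_range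
  exact ⟨K, fun n => hK ⟨n, rfl⟩⟩

/-- From 1-quasi-greediness, every finite coordinate projection is a contraction. -/
lemma finite_proj_bound (B : BiorthSchauderBasis X) (hsn : SemiNormalized B)
    (H : ∀ (x : X) (Λ : Finset ℕ), IsGreedySet B x Λ → ‖greedySum B x Λ‖ ≤ ‖x‖)
    (x : X) (A : Finset ℕ) : ‖∑ n ∈ A, B.coord n x • B.e n‖ ≤ ‖x‖ := by
  classical
  set A' := A.filter (fun n => B.coord n x ≠ 0) with hA'
  have hsum : ∑ n ∈ A', B.coord n x • B.e n = ∑ n ∈ A, B.coord n x • B.e n :=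
    Finset.sum_filter_of_ne (fun n _ h hc => h (by rw [hc, zero_smul]))
  rw [← hsum]
  rcases A'.eq_empty_or_nonempty with hE | hNE
  · simp [hE]
  set P := ∑ n ∈ A', B.coord n x • B.e n with hP
  set m := A'.inf' hNE (fun n => |B.coord n x|) with hm
  have hm0 : 0 < m := by
    rw [hm, Finset.lt_inf'_iff]
    intro i hi
    have : B.coord i x ≠ 0 := (Finset.mem_filter.mp hi).2
    exact abs_pos.mpr this
  obtain ⟨K, hK⟩ := coord_bounded B hsn x
  set M := max 1 (K / m) with hM
  have hM1 : 1 ≤ M := le_max_left _ _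
  have hM0 : 0 < M := lt_of_lt_of_le one_pos hM1
  have hKM : K ≤ M * m := by
    have : K / m ≤ M := le_max_right _ _
    calc K = K / m * m := by field_simp
    _ ≤ M * m := mul_le_mul_of_nonneg_right this hm0.le
  set z := x + (M - 1) • P with hz
  have hz_coord : ∀ n, B.coord n z = (if n ∈ A' then M else 1) * B.coord n x := by
    intro n
    rw [hz, map_add, map_smul, hP, coord_sum, smul_eq_mul]
    split <;> ring
  have hgreedy : IsGreedySet B z A' := by
    intro j hj k hk
    rw [hz_coord, hz_coord, if_pos hj, if_neg hk, one_mul, abs_mul]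
    have h1 : |B.coord k x| ≤ K := hK k
    have h2 : m ≤ |B.coord j x| := Finset.inf'_le _ hj
    have h3 : |(M : ℝ)| = M := abs_of_pos hM0
    calc |B.coord k x| ≤ K := h1
    _ ≤ M * m := hKM
    _ ≤ M * |B.coord j x| := mul_le_mul_of_nonneg_left h2 hM0.le
    _ = |M| * |B.coord j x| := by rw [h3]
  have hgs : greedySum B z A' = M • P := by
    rw [greedySum, hP, Finset.smul_sum]
    refine Finset.sum_congr rfl fun n hn => ?_
    rw [hz_coord, if_pos hn, mul_smul]
  have hqg := H z A' hgreedy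
  rw [hgs] at hqg
  have h1 : M * ‖P‖ ≤ ‖x‖ + (M - 1) * ‖P‖ := by
    calc M * ‖P‖ = ‖M • P‖ := by rw [norm_smul, Real.norm_eq_abs, abs_of_pos hM0]
    _ ≤ ‖z‖ := hqg
    _ ≤ ‖x‖ + ‖(M - 1) • P‖ := norm_add_le _ _
    _ = ‖x‖ + (M - 1) * ‖P‖ := by
        rw [norm_smul, Real.norm_eq_abs, abs_of_nonneg (by linarith)]
  linarith

end Aux

theorem quasiGreedy_one_iff_suppression_one {X : Type*} [NormedAddCommGroup X]
    [NormedSpace ℝ X] [CompleteSpace X] (B : BiorthSchauderBasis X) (hsn : SemiNormalized B) :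
    (∀ (x : X) (Λ : Finset ℕ), IsGreedySet B x Λ → ‖greedySum B x Λ‖ ≤ ‖x‖) ↔
    (∀ (A : Set ℕ) (x : X), ∃ p : X,
      HasSum (fun n : A => B.coord n x • B.e n) p ∧ ‖p‖ ≤ ‖x‖) := by
  classical
  constructor
  · intro H A x
    set f : ℕ → X := A.indicator (fun n => B.coord n x • B.e n) with hf
    have hfin : ∀ t : Finset ℕ, ∑ n ∈ t, f n
        = ∑ n ∈ t.filter (· ∈ A), B.coord n x • B.e n := by
      intro t
      rw [Finset.sum_filter]
      exact Finset.sum_congr rfl fun n _ => by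
        by_cases h : n ∈ A <;> simp [hf, Set.indicator, h]
    have hsummable : Summable f := by
      rw [summable_iff_vanishing_norm]
      intro ε hε
      obtain ⟨N, hN⟩ := (Metric.tendsto_atTop.mp (B.expansion x) ε hε) |>.imp
        (fun N h => h N le_rfl)
      refine ⟨Finset.range N, fun t ht => ?_⟩
      rw [hfin]
      set y := x - ∑ n ∈ Finset.range N, B.coord n x • B.e n with hy
      have hcoord : ∀ n ∈ t.filter (· ∈ A), B.coord n x • B.e n = B.coord n y • B.e n := by
        intro n hn
        have hnt : n ∈ t := (Finset.mem_filter.mp hn).1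
        have hnN : n ∉ Finset.range N := fun hc =>
          (Finset.disjoint_left.mp ht hnt) hc
        rw [hy, map_sub, coord_sum, if_neg hnN, sub_zero]
      rw [Finset.sum_congr rfl hcoord]
      calc ‖∑ n ∈ t.filter (· ∈ A), B.coord n y • B.e n‖ ≤ ‖y‖ :=
            finite_proj_bound B hsn H y _
      _ < ε := by rw [hy, ← dist_eq_norm, dist_comm]; exact hN
    obtain ⟨p, hp⟩ := hsummable
    refine ⟨p, ?_, ?_⟩
    · exact hasSum_subtype_iff_indicator.mpr hp
    · refine le_of_tendsto hp.norm (Filter.Eventually.of_forall fun t => ?_)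
      rw [hfin]
      exact finite_proj_bound B hsn H x _
  · intro H x Λ hΛ
    obtain ⟨p, hp, hpn⟩ := H (↑Λ : Set ℕ) x
    have h2 : HasSum (fun n : (↑Λ : Set ℕ) => B.coord n x • B.e n)
        (∑ n : (↑Λ : Set ℕ), B.coord n x • B.e n) := hasSum_fintype _
    have hpe : p = ∑ n : (↑Λ : Set ℕ), B.coord n x • B.e n := hp.unique h2
    have : greedySum B x Λ = p := by
      rw [hpe, greedySum]
      rw [← Finset.sum_coe_sort Λ (fun n => B.coord n x • B.e n)]
      rfl
    rw [this]
    exact hpn
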